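/- For every positive integer m divisible by 3 — equivalently, for n ≡ 0 (mod 3) — we have P(n, 2n/3) = n + 2. -/

import Mathlib

/-- The contiguous length-`n` window of the sequence `s` starting at position `i`. -/
def window {α : Type*} (s : ℕ → α) (n i : ℕ) : Fin n → α := fun k => s (i + k)

/-- `s` (restricted to its first `N` entries) is a robust positioning sequence of strength `n`
and distance `d`. -/
def IsRPS {α : Type*} [DecidableEq α] (s : ℕ → α) (N n d : ℕ) : Prop :=
  ∀ i j : ℕ, i + n ≤ N → j + n ≤ N → i ≠ j →
    d ≤ hammingDist (window s n i) (window s n j)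

lemma hamming_eq_sum (s : ℕ → Bool) (n a b : ℕ) :
    hammingDist (window s n a) (window s n b)
      = ∑ k ∈ Finset.range n, (if s (a + k) ≠ s (b + k) then 1 else 0) := by
  rw [hammingDist, Finset.card_filter, ← Fin.sum_univ_eq_sum_range]
  rfl

lemma hamming_eq_sum' (s : ℕ → Bool) (n a b : ℕ) :
    hammingDist (window s n a) (window s n b)
      = ∑ k ∈ Finset.range n, (if s (k + a) ≠ s (k + b) then 1 else 0) := by
  rw [hamming_eq_sum]
  exact Finset.sum_congr rfl fun k _ => by rw [Nat.add_comm a, Nat.add_comm b]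

lemma periodic3_sum (g : ℕ → ℕ) (hg : ∀ k, g (k + 3) = g k) (m : ℕ) :
    ∑ k ∈ Finset.range (3 * m), g k = m * (g 0 + g 1 + g 2) := by
  have key : ∀ t r, g (3 * t + r) = g r := by
    intro t
    induction t with
    | zero => simp
    | succ t ih =>
        intro r
        have h : 3 * (t + 1) + r = (3 * t + r) + 3 := by ring
        rw [h, hg, ih]
  induction m with
  | zero => simp
  | succ m ih =>
      have h3 : 3 * (m + 1) = 3 * m + 1 + 1 + 1 := by ring
      rw [h3, Finset.sum_range_succ, Finset.sum_range_succ, Finset.sum_range_succ, ih]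
      have e0 : g (3 * m) = g 0 := by have := key m 0; simpa using this
      have e1 : g (3 * m + 1) = g 1 := key m 1
      rw [e0, e1, key m 2]; ring

/-- The witness sequence `100100100...`. -/
def sLow : ℕ → Bool := fun i => decide (i % 3 = 0)

lemma rps_lower (m : ℕ) (hm : 0 < m) :
    IsRPS sLow (3 * m + 2) (3 * m) (2 * m) := by
  intro i j hi hj hij
  rw [hamming_eq_sum]
  have hper : ∀ k, (fun k => if sLow (i + k) ≠ sLow (j + k) then (1:ℕ) else 0) (k + 3)
      = (fun k => if sLow (i + k) ≠ sLow (j + k) then (1:ℕ) else 0) k := by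
    intro k
    simp only [sLow]
    have h1 : i + (k + 3) = (i + k) + 3 := by ring
    have h2 : j + (k + 3) = (j + k) + 3 := by ring
    simp only [h1, h2, Nat.add_mod_right]
    rfl
  rw [periodic3_sum _ hper m]
  have hi2 : i ≤ 2 := by omega
  have hj2 : j ≤ 2 := by omega
  have hval : (if sLow (i + 0) ≠ sLow (j + 0) then (1:ℕ) else 0)
      + (if sLow (i + 1) ≠ sLow (j + 1) then (1:ℕ) else 0)
      + (if sLow (i + 2) ≠ sLow (j + 2) then (1:ℕ) else 0) = 2 := by
    interval_cases i <;> interval_cases j <;> first | omega | decide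
  rw [hval]
  omega

def Dsum (s : ℕ → Bool) (n a b : ℕ) : ℕ :=
  ∑ k ∈ Finset.range n, (if s (k + a) ≠ s (k + b) then 1 else 0)

def Fsum (s : ℕ → Bool) (k : ℕ) : ℕ :=
  (if s (k + 0) ≠ s (k + 1) then 1 else 0) + (if s (k + 0) ≠ s (k + 2) then 1 else 0)
  + (if s (k + 0) ≠ s (k + 3) then 1 else 0) + (if s (k + 1) ≠ s (k + 2) then 1 else 0)
  + (if s (k + 1) ≠ s (k + 3) then 1 else 0) + (if s (k + 2) ≠ s (k + 3) then 1 else 0)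

lemma bool_bound (a b c d : Bool) :
    ((if a ≠ b then 1 else 0) + (if a ≠ c then 1 else 0) + (if a ≠ d then 1 else 0)
    + (if b ≠ c then 1 else 0) + (if b ≠ d then 1 else 0) + (if c ≠ d then 1 else 0) : ℕ)
      ≤ 4 := by
  revert a b c d; decide

lemma bool_iff (a b c d : Bool)
    (h : ((if a ≠ b then 1 else 0) + (if a ≠ c then 1 else 0) + (if a ≠ d then 1 else 0)
    + (if b ≠ c then 1 else 0) + (if b ≠ d then 1 else 0) + (if c ≠ d then 1 else 0) : ℕ)
      = 4) : (a = c ↔ b = d) := by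
  revert a b c d; decide

lemma Fsum_le (s : ℕ → Bool) (k : ℕ) : Fsum s k ≤ 4 := bool_bound _ _ _ _

lemma Fsum_split (s : ℕ → Bool) (n : ℕ) :
    ∑ k ∈ Finset.range n, Fsum s k
      = Dsum s n 0 1 + Dsum s n 0 2 + Dsum s n 0 3 + Dsum s n 1 2
        + Dsum s n 1 3 + Dsum s n 2 3 := by
  simp only [Fsum, Dsum, Finset.sum_add_distrib]

lemma rps_upper (m : ℕ) (hm : 0 < m) (s : ℕ → Bool) (N : ℕ)
    (h : IsRPS s N (3 * m) (2 * m)) : N ≤ 3 * m + 2 := by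
  by_contra hN
  push_neg at hN
  have hD : ∀ a b : ℕ, a ≤ 3 → b ≤ 3 → a ≠ b → 2 * m ≤ Dsum s (3 * m) a b := by
    intro a b ha hb hab
    rw [Dsum, ← hamming_eq_sum']
    exact h a b (by omega) (by omega) hab
  have h01 := hD 0 1 (by omega) (by omega) (by omega)
  have h02 := hD 0 2 (by omega) (by omega) (by omega)
  have h03 := hD 0 3 (by omega) (by omega) (by omega)
  have h12 := hD 1 2 (by omega) (by omega) (by omega)
  have h13 := hD 1 3 (by omega) (by omega) (by omega)
  have h23 := hD 2 3 (by omega) (by omega) (by omega)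
  have hsplit := Fsum_split s (3 * m)
  have hS_le : ∑ k ∈ Finset.range (3 * m), Fsum s k ≤ 4 * (3 * m) := by
    calc ∑ k ∈ Finset.range (3 * m), Fsum s k ≤ ∑ _k ∈ Finset.range (3 * m), 4 :=
          Finset.sum_le_sum fun k _ => Fsum_le s k
      _ = 4 * (3 * m) := by simp [Nat.mul_comm]
  have hFk : ∀ k ∈ Finset.range (3 * m), Fsum s k = 4 := by
    intro k hk
    by_contra hne
    have hlt : Fsum s k < 4 := lt_of_le_of_ne (Fsum_le s k) hne
    have hstrict : ∑ k ∈ Finset.range (3 * m), Fsum s k < ∑ _k ∈ Finset.range (3 * m), 4 :=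
      Finset.sum_lt_sum (fun i _ => Fsum_le s i) ⟨k, hk, hlt⟩
    simp only [Finset.sum_const, Finset.card_range, smul_eq_mul] at hstrict
    omega
  have hstep : ∀ k, k < 3 * m → ((s k = s (k + 2)) ↔ (s (k + 1) = s (k + 3))) := by
    intro k hk
    have h4 := hFk k (Finset.mem_range.mpr hk)
    rw [Fsum] at h4
    have := bool_iff _ _ _ _ h4
    simpa using this
  have hconst : ∀ k, k < 3 * m → ((s k = s (k + 2)) ↔ (s 0 = s 2)) := by
    intro k
    induction k with
    | zero => intro _; rfl
    | succ k ih =>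
        intro hk
        have e : k + 1 + 2 = k + 3 := rfl
        rw [e, ← hstep k (by omega)]
        exact ih (by omega)
  by_cases hc : s 0 = s 2
  · have hzero : Dsum s (3 * m) 0 2 = 0 := by
      rw [Dsum]
      apply Finset.sum_eq_zero
      intro k hk
      have heq : s k = s (k + 2) := (hconst k (Finset.mem_range.mp hk)).2 hc
      simp [heq]
    omega
  · have hone : Dsum s (3 * m) 0 2 = 3 * m := by
      rw [Dsum]
      have hterm : ∀ k ∈ Finset.range (3 * m),
          (if s (k + 0) ≠ s (k + 2) then (1:ℕ) else 0) = 1 := by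
        intro k hk
        have hne2 : s k ≠ s (k + 2) := fun hh => hc ((hconst k (Finset.mem_range.mp hk)).1 hh)
        simp [hne2]
      rw [Finset.sum_congr rfl hterm]
      simp
    omega

/-- For `n ≡ 0 (mod 3)` (with `n` positive), `P(n, 2n/3) = n + 2`. -/
theorem P_eq_of_two_thirds (n : ℕ) (hn : 0 < n) (h3 : 3 ∣ n) :
    (∃ s : ℕ → Bool, IsRPS s (n + 2) n (2 * n / 3)) ∧
    (∀ N : ℕ, (∃ s : ℕ → Bool, IsRPS s N n (2 * n / 3)) → N ≤ n + 2) := by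
  obtain ⟨m, rfl⟩ : ∃ m, n = 3 * m := ⟨n / 3, by omega⟩
  have hm : 0 < m := by omega
  have hd : 2 * (3 * m) / 3 = 2 * m := by omega
  constructor
  · refine ⟨sLow, ?_⟩
    rw [hd]
    exact rps_lower m hm
  · rintro N ⟨s, hs⟩
    rw [hd] at hs
    exact rps_upper m hm s N hs
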